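/- Let g, h : ℂ → ℂ be injective functions and ε ∈ {0, 1}. Define α(u,v) = 1/(g(u) - g(v)), β(u,v) = 1/(h(u) - h(v)), δ(u,v) = ε/(g(v) - h(u)) (assuming g(v) ≠ h(u) everywhere when ε = 1). Then the system of functional equations α(v,w)α(u,v) + α(w,u)α(v,w) + α(u,v)α(w,u) = 0, β(v,w)β(u,v) + β(w,u)β(v,w) + β(u,v)β(w,u) = 0, δ(v,u)δ(v,w) = α(w,u)(δ(v,u) - δ(v,w)), and δ(w,v)δ(u,v) = β(w,u)(δ(w,v) - δ(u,v)) holds at all points where the expressions are defined. -/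

import Mathlib

theorem stmt_8 (g h : ℂ → ℂ) (hg : Function.Injective g) (hh : Function.Injective h)
    (ε : ℂ) (hε : ε = 0 ∨ ε = 1)
    (hgh : ε = 1 → ∀ u v, g v ≠ h u) :
    let α : ℂ → ℂ → ℂ := fun u v => 1 / (g u - g v)
    let β : ℂ → ℂ → ℂ := fun u v => 1 / (h u - h v)
    let δ : ℂ → ℂ → ℂ := fun u v => ε / (g v - h u)
    ∀ u v w : ℂ, u ≠ v → u ≠ w → v ≠ w →
      α v w * α u v + α w u * α v w + α u v * α w u = 0 ∧
      β v w * β u v + β w u * β v w + β u v * β w u = 0 ∧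
      δ v u * δ v w = α w u * (δ v u - δ v w) ∧
      δ w v * δ u v = β w u * (δ w v - δ u v) := by
  intro α β δ u v w huv huw hvw
  have g1 : g u - g v ≠ 0 := sub_ne_zero.mpr (fun e => huv (hg e))
  have g2 : g v - g w ≠ 0 := sub_ne_zero.mpr (fun e => hvw (hg e))
  have g3 : g w - g u ≠ 0 := sub_ne_zero.mpr (fun e => huw.symm (hg e))
  have h1 : h u - h v ≠ 0 := sub_ne_zero.mpr (fun e => huv (hh e))
  have h2 : h v - h w ≠ 0 := sub_ne_zero.mpr (fun e => hvw (hh e))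
  have h3 : h w - h u ≠ 0 := sub_ne_zero.mpr (fun e => huw.symm (hh e))
  refine ⟨?_, ?_, ?_, ?_⟩
  · show 1 / (g v - g w) * (1 / (g u - g v)) + 1 / (g w - g u) * (1 / (g v - g w)) +
      1 / (g u - g v) * (1 / (g w - g u)) = 0
    field_simp
    ring
  · show 1 / (h v - h w) * (1 / (h u - h v)) + 1 / (h w - h u) * (1 / (h v - h w)) +
      1 / (h u - h v) * (1 / (h w - h u)) = 0
    field_simp
    ring
  · rcases hε with rfl | rfl
    · simp [δ]
    · have d1 : g u - h v ≠ 0 := sub_ne_zero.mpr (hgh rfl v u)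
      have d2 : g w - h v ≠ 0 := sub_ne_zero.mpr (hgh rfl v w)
      show (1:ℂ) / (g u - h v) * (1 / (g w - h v)) =
        1 / (g w - g u) * (1 / (g u - h v) - 1 / (g w - h v))
      field_simp
      ring
  · rcases hε with rfl | rfl
    · simp [δ]
    · have d1 : g v - h w ≠ 0 := sub_ne_zero.mpr (hgh rfl w v)
      have d2 : g v - h u ≠ 0 := sub_ne_zero.mpr (hgh rfl u v)
      show (1:ℂ) / (g v - h w) * (1 / (g v - h u)) =
        1 / (h w - h u) * (1 / (g v - h w) - 1 / (g v - h u))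
      field_simp
      ring
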